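/- If u, u' ∈ ℂ satisfy both Θ₀(u)·Θ₁(u') = Θ₁(u)·Θ₀(u') and Θ₀(u + τ/4)·Θ₁(u' + τ/4) = Θ₁(u + τ/4)·Θ₀(u' + τ/4), then u − u' ∈ Λ_τ. (Hence the map Φ = (Φ₁, Φ₂) : ℂ/Λ_τ → ℙ¹ × ℙ¹ with Φ₁(u) = (Θ₀(u) : −Θ₁(u)) and Φ₂(u) = (Θ₀(u + τ/4) : −iΘ₁(u + τ/4)) is injective on the elliptic curve E_τ = ℂ/Λ_τ.) -/

import Mathlib

open Complex

/-- `Θ₀(u) = θ[0,0](2u,2τ) = ∑_{m∈ℤ} exp(2πiτm² + 4πimu)`. -/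
noncomputable def Th0 (τ u : ℂ) : ℂ :=
  ∑' m : ℤ, Complex.exp (2 * Real.pi * I * τ * (m : ℂ) ^ 2
      + 4 * Real.pi * I * (m : ℂ) * u)

/-- `Θ₁(u) = θ[1/2,0](2u,2τ) = ∑_{m∈ℤ} exp(2πiτ(m+1/2)² + 4πi(m+1/2)u)`. -/
noncomputable def Th1 (τ u : ℂ) : ℂ :=
  ∑' m : ℤ, Complex.exp (2 * Real.pi * I * τ * ((m : ℂ) + 1 / 2) ^ 2
      + 4 * Real.pi * I * ((m : ℂ) + 1 / 2) * u)

/-- Membership in the lattice `Λ_τ = ℤ + ℤτ ⊂ ℂ`. -/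
def inLattice (τ z : ℂ) : Prop := ∃ m n : ℤ, z = (m : ℂ) + (n : ℂ) * τ

noncomputable section ThetaProofAux

/-- Term of the odd theta function `θ₁₁`-variant `V`. -/
noncomputable def Vterm (τ z : ℂ) (n : ℤ) : ℂ :=
  Complex.exp ((Real.pi : ℂ) * I * τ * ((n : ℂ) + 1 / 2) ^ 2
    + 2 * (Real.pi : ℂ) * I * ((n : ℂ) + 1 / 2) * z + (Real.pi : ℂ) * I * (n : ℂ))

/-- The odd theta function (up to a nonzero constant, `θ₁₁(z,τ)`). -/
noncomputable def V (τ z : ℂ) : ℂ := ∑' n : ℤ, Vterm τ z n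

lemma Vterm_eq_jacobi (τ z : ℂ) (n : ℤ) :
    Vterm τ z n = Complex.exp ((Real.pi : ℂ) * I * τ / 4 + (Real.pi : ℂ) * I * z)
      * jacobiTheta₂_term n (z + 1 / 2 + τ / 2) τ := by
  rw [Vterm, jacobiTheta₂_term, ← Complex.exp_add]
  congr 1
  ring

lemma summable_Vterm {τ : ℂ} (hτ : 0 < τ.im) (z : ℂ) : Summable (Vterm τ z) := by
  rw [funext (Vterm_eq_jacobi τ z)]
  exact ((summable_jacobiTheta₂_term_iff _ τ).2 hτ).mul_left _

lemma summable_norm_jacobi (z : ℂ) {τ : ℂ} (hτ : 0 < τ.im) :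
    Summable fun n : ℤ => ‖jacobiTheta₂_term n z τ‖ := by
  apply Summable.of_nonneg_of_le (fun n => norm_nonneg _)
    (fun n => norm_jacobiTheta₂_term_le hτ (le_refl |z.im|) (le_refl τ.im) n)
  simpa using summable_pow_mul_jacobiTheta₂_term_bound |z.im| hτ 0

lemma summable_norm_Vterm {τ : ℂ} (hτ : 0 < τ.im) (z : ℂ) :
    Summable fun n : ℤ => ‖Vterm τ z n‖ := by
  simp_rw [Vterm_eq_jacobi, norm_mul]
  exact (summable_norm_jacobi _ hτ).mul_left _

lemma V_eq_jacobi (τ z : ℂ) :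
    V τ z = Complex.exp ((Real.pi : ℂ) * I * τ / 4 + (Real.pi : ℂ) * I * z)
      * jacobiTheta₂ (z + 1 / 2 + τ / 2) τ := by
  rw [V, jacobiTheta₂]
  simp_rw [Vterm_eq_jacobi]
  exact tsum_mul_left

lemma Vterm_T (τ z : ℂ) (k n : ℤ) :
    Vterm (τ + k) z n = Complex.exp ((Real.pi : ℂ) * I * k / 4) * Vterm τ z n := by
  obtain ⟨j, hj⟩ : Even (n * (n + 1)) := Int.even_mul_succ_self n
  have hj' : (n : ℂ) * ((n : ℂ) + 1) = (j : ℂ) + (j : ℂ) := by exact_mod_cast congrArg (Int.cast : ℤ → ℂ) hj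
  have key : (Real.pi : ℂ) * I * (τ + k) * ((n : ℂ) + 1 / 2) ^ 2
      + 2 * (Real.pi : ℂ) * I * ((n : ℂ) + 1 / 2) * z + (Real.pi : ℂ) * I * (n : ℂ)
      = ((Real.pi : ℂ) * I * k / 4 + ((Real.pi : ℂ) * I * τ * ((n : ℂ) + 1 / 2) ^ 2
        + 2 * (Real.pi : ℂ) * I * ((n : ℂ) + 1 / 2) * z + (Real.pi : ℂ) * I * (n : ℂ)))
        + ((k * j : ℤ) : ℂ) * (2 * (Real.pi : ℂ) * I) := by
    push_cast
    linear_combination ((Real.pi : ℂ) * I * k) * hj'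
  rw [Vterm, Vterm, key, Complex.exp_add, Complex.exp_int_mul_two_pi_mul_I, mul_one,
    Complex.exp_add]

lemma V_T (τ z : ℂ) (k : ℤ) :
    V (τ + k) z = Complex.exp ((Real.pi : ℂ) * I * k / 4) * V τ z := by
  rw [V, V]; simp_rw [Vterm_T]; exact tsum_mul_left

lemma Vterm_z_add_one (τ z : ℂ) (n : ℤ) : Vterm τ (z + 1) n = - Vterm τ z n := by
  have key : (Real.pi : ℂ) * I * τ * ((n : ℂ) + 1 / 2) ^ 2
      + 2 * (Real.pi : ℂ) * I * ((n : ℂ) + 1 / 2) * (z + 1) + (Real.pi : ℂ) * I * (n : ℂ)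
      = ((Real.pi : ℂ) * I * τ * ((n : ℂ) + 1 / 2) ^ 2
        + 2 * (Real.pi : ℂ) * I * ((n : ℂ) + 1 / 2) * z + (Real.pi : ℂ) * I * (n : ℂ))
        + ((n : ℂ) * (2 * (Real.pi : ℂ) * I) + (Real.pi : ℂ) * I) := by ring
  rw [Vterm, Vterm, key]
  simp only [Complex.exp_add, Complex.exp_int_mul_two_pi_mul_I, Complex.exp_pi_mul_I]
  ring

lemma V_z_add_one (τ z : ℂ) : V τ (z + 1) = - V τ z := by
  rw [V, V, ← tsum_neg]; exact tsum_congr (Vterm_z_add_one τ z)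

lemma Vterm_z_add_tau (τ z : ℂ) (n : ℤ) :
    Vterm τ (z + τ) n
      = - Complex.exp (-(Real.pi : ℂ) * I * τ - 2 * (Real.pi : ℂ) * I * z)
        * Vterm τ z (n + 1) := by
  rw [Vterm, Vterm]
  have : - Complex.exp (-(Real.pi : ℂ) * I * τ - 2 * (Real.pi : ℂ) * I * z) =
      Complex.exp (-(Real.pi : ℂ) * I * τ - 2 * (Real.pi : ℂ) * I * z - (Real.pi : ℂ) * I) := by
    rw [show -(Real.pi : ℂ) * I * τ - 2 * (Real.pi : ℂ) * I * z - (Real.pi : ℂ) * I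
        = (-(Real.pi : ℂ) * I * τ - 2 * (Real.pi : ℂ) * I * z) + (-((Real.pi : ℂ) * I)) from by
        ring, Complex.exp_add, Complex.exp_neg, Complex.exp_pi_mul_I]
    ring
  rw [this, ← Complex.exp_add]
  congr 1
  push_cast
  ring

lemma V_z_add_tau (τ z : ℂ) :
    V τ (z + τ) = - Complex.exp (-(Real.pi : ℂ) * I * τ - 2 * (Real.pi : ℂ) * I * z) * V τ z := by
  rw [V, V]
  simp_rw [Vterm_z_add_tau]
  rw [tsum_mul_left]
  congr 1
  exact (Equiv.addRight (1 : ℤ)).tsum_eq fun n => Vterm τ z n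

lemma V_zero_shift_tau_iff (τ z : ℂ) : (V τ (z + τ) = 0) ↔ (V τ z = 0) := by
  rw [V_z_add_tau]
  simp [Complex.exp_ne_zero]

lemma V_zero_shift_one_iff (τ z : ℂ) : (V τ (z + 1) = 0) ↔ (V τ z = 0) := by
  rw [V_z_add_one]; simp

lemma V_zero_shift_nat (τ : ℂ) (m : ℕ) : ∀ z, (V τ (z + m * τ) = 0 ↔ V τ z = 0) := by
  induction m with
  | zero => intro z; norm_num
  | succ k ih =>
      intro z
      have e : z + ((k : ℂ) + 1) * τ = (z + (k : ℂ) * τ) + τ := by ring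
      push_cast
      rw [e, V_zero_shift_tau_iff]
      have := ih z
      push_cast at this
      exact this

lemma V_zero_shift (τ z : ℂ) (n : ℤ) : V τ (z + n * τ) = 0 ↔ V τ z = 0 := by
  obtain ⟨m, rfl | rfl⟩ := n.eq_nat_or_neg
  · have := V_zero_shift_nat τ m z
    push_cast at this ⊢
    exact this
  · have := V_zero_shift_nat τ m (z - m * τ)
    push_cast at this ⊢
    rw [show z - (m : ℂ) * τ + (m : ℂ) * τ = z by ring] at this
    rw [show z + -(m : ℂ) * τ = z - (m : ℂ) * τ by ring]
    exact this.symm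

-- auxiliary real facts
lemma exp_pi_half_ge : (4 : ℝ) ≤ Real.exp (Real.pi * (1/2)) := by
  have h1 : (1.5 : ℝ) ≤ Real.pi * (1/2) := by nlinarith [Real.pi_gt_three]
  have h2 : (4 : ℝ) ≤ Real.exp 1.5 := by
    have := Real.exp_one_gt_d9
    have h3 : (1.5 : ℝ) ≤ Real.exp 0.5 := by
      have := Real.add_one_le_exp (0.5 : ℝ)
      linarith
    have : Real.exp 1.5 = Real.exp 1 * Real.exp 0.5 := by
      rw [← Real.exp_add]; norm_num
    nlinarith [Real.exp_pos (0.5 : ℝ), Real.exp_pos (1:ℝ)]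
  calc (4:ℝ) ≤ Real.exp 1.5 := h2
    _ ≤ Real.exp (Real.pi * (1/2)) := Real.exp_le_exp.2 h1

lemma nat_ineq (n : ℕ) : (2 * n + 3 : ℝ) ≤ 3 * 2 ^ n := by
  induction n with
  | zero => norm_num
  | succ k ih =>
      have : (2:ℝ)^(k+1) = 2 * 2^k := by ring
      push_cast at ih ⊢
      nlinarith [pow_pos (by norm_num : (0:ℝ) < 2) k]

/-- The key non-vanishing estimate: in the strip `|Im z| ≤ Im τ / 2` with `Im τ ≥ 1/2`,
zeros of `V` are integers. -/
lemma strip_lemma {τ z : ℂ} (hτ2 : (1:ℝ)/2 ≤ τ.im) (hz : |z.im| ≤ τ.im / 2)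
    (hV : V τ z = 0) : ∃ m : ℤ, z = (m : ℂ) := by
  have hτ : 0 < τ.im := lt_of_lt_of_le (by norm_num) hτ2
  set T : ℝ := τ.im with hT
  set x : ℂ := Complex.exp ((Real.pi : ℂ) * I * z) with hx
  set y : ℂ := Complex.exp (-((Real.pi : ℂ) * I * z)) with hy
  by_cases hxy : x = y
  · -- x = y ⇒ z integer
    rw [hx, hy, Complex.exp_eq_exp_iff_exists_int] at hxy
    obtain ⟨n, hn⟩ := hxy
    refine ⟨n, ?_⟩
    have hne : (2 : ℂ) * (Real.pi : ℂ) * I ≠ 0 := by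
      simp [Real.pi_ne_zero, I_ne_zero]
    apply mul_left_cancel₀ hne
    linear_combination hn
  · exfalso
    -- definitions
    set c : ℕ → ℂ := fun n =>
      Complex.exp ((Real.pi : ℂ) * I * τ * ((n : ℂ) + 1 / 2) ^ 2 + (Real.pi : ℂ) * I * (n : ℂ))
      with hc
    set S : ℕ → ℂ := fun n => ∑ i ∈ Finset.range (2 * n + 1), x ^ i * y ^ (2 * n + 1 - 1 - i)
      with hS
    -- pair identity
    have pair : ∀ n : ℕ, Vterm τ z (n : ℤ) + Vterm τ z (-((n : ℤ) + 1))
        = (c n * S n) * (x - y) := by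
      intro n
      have h1 : Vterm τ z (n : ℤ) = c n * x ^ (2 * n + 1) := by
        rw [Vterm, hc, hx, ← Complex.exp_nat_mul, ← Complex.exp_add]
        congr 1
        push_cast
        ring
      have h2 : Vterm τ z (-((n : ℤ) + 1)) = -(c n * y ^ (2 * n + 1)) := by
        have key : (Real.pi : ℂ) * I * τ * (((-((n : ℤ) + 1) : ℤ) : ℂ) + 1 / 2) ^ 2
            + 2 * (Real.pi : ℂ) * I * (((-((n : ℤ) + 1) : ℤ) : ℂ) + 1 / 2) * z
            + (Real.pi : ℂ) * I * (((-((n : ℤ) + 1) : ℤ) : ℂ))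
            = (((Real.pi : ℂ) * I * τ * ((n : ℂ) + 1 / 2) ^ 2 + (Real.pi : ℂ) * I * (n : ℂ))
              + ((2 * n + 1 : ℕ) : ℂ) * (-((Real.pi : ℂ) * I * z)) + (Real.pi : ℂ) * I)
              + ((-((n : ℤ) + 1) : ℤ) : ℂ) * (2 * (Real.pi : ℂ) * I) := by
          push_cast
          ring
        rw [Vterm, key, Complex.exp_add, Complex.exp_int_mul_two_pi_mul_I, mul_one,
          Complex.exp_add, Complex.exp_add, Complex.exp_pi_mul_I, ← Complex.exp_nat_mul]
        simp only [hc, hy]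
        ring
      rw [h1, h2, hS]
      have h3 := geom_sum₂_mul x y (2 * n + 1)
      calc c n * x ^ (2*n+1) + -(c n * y ^ (2*n+1))
          = c n * (x ^ (2*n+1) - y ^ (2*n+1)) := by ring
        _ = c n * ((∑ i ∈ Finset.range (2*n+1), x ^ i * y ^ (2*n+1-1-i)) * (x - y)) := by
            rw [h3]
        _ = _ := by ring
    -- V as a sum over ℕ
    have hsumV := summable_Vterm hτ z
    have hVnat : V τ z = ∑' n : ℕ, (Vterm τ z (n : ℤ) + Vterm τ z (-((n : ℤ) + 1))) :=
      (tsum_nat_add_neg_add_one hsumV).symm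
    have hVfac : V τ z = (∑' n : ℕ, c n * S n) * (x - y) := by
      rw [hVnat]
      calc ∑' n : ℕ, (Vterm τ z (n : ℤ) + Vterm τ z (-((n : ℤ) + 1)))
          = ∑' n : ℕ, (c n * S n) * (x - y) := tsum_congr pair
        _ = (∑' n : ℕ, c n * S n) * (x - y) := tsum_mul_right
    have hG : (∑' n : ℕ, c n * S n) = 0 := by
      have hxysub : x - y ≠ 0 := sub_ne_zero.2 hxy
      have := hVfac.symm.trans hV
      exact (mul_eq_zero.1 this).resolve_right hxysub
    -- summability of the c*S series
    have hsumpair : Summable (fun n : ℕ => Vterm τ z (n : ℤ) + Vterm τ z (-((n : ℤ) + 1))) :=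
      hsumV.nat_add_neg_add_one
    have hsumcS : Summable (fun n : ℕ => c n * S n) := by
      have : (fun n : ℕ => c n * S n)
          = fun n : ℕ => (Vterm τ z (n : ℤ) + Vterm τ z (-((n : ℤ) + 1))) * (x - y)⁻¹ := by
        funext n
        rw [pair n, mul_inv_cancel_right₀ (sub_ne_zero.2 hxy)]
      rw [this]
      exact hsumpair.mul_right _
    -- norms
    have hnormc : ∀ n : ℕ, ‖c n‖ = Real.exp (-(Real.pi * T * ((n : ℝ) + 1/2) ^ 2)) := by
      intro n
      have e1 : (Real.pi : ℂ) * I * τ * ((n : ℂ) + 1 / 2) ^ 2 + (Real.pi : ℂ) * I * (n : ℂ)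
          = ((Real.pi * ((n : ℝ) + 1/2) ^ 2 : ℝ) : ℂ) * τ * I + ((Real.pi * n : ℝ) : ℂ) * I := by
        push_cast; ring
      rw [hc]
      simp only [e1, Complex.norm_exp, add_re, mul_I_re, im_ofReal_mul,
        Complex.ofReal_im]
      rw [hT]
      ring_nf
    have hnormx : ‖x‖ = Real.exp (-(Real.pi * z.im)) := by
      have e1 : (Real.pi : ℂ) * I * z = ((Real.pi : ℝ) : ℂ) * z * I := by ring
      rw [hx]
      simp only [e1, Complex.norm_exp, mul_I_re, im_ofReal_mul]
    have hnormy : ‖y‖ = Real.exp (Real.pi * z.im) := by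
      have e1 : -((Real.pi : ℂ) * I * z) = (-(Real.pi : ℝ) : ℂ) * z * I := by push_cast; ring
      rw [hy]
      simp only [e1, Complex.norm_exp, mul_I_re, im_ofReal_mul]
      simp
    -- bound for S n
    have hnormS : ∀ n : ℕ, ‖S n‖ ≤ (2 * (n : ℝ) + 1) * Real.exp (Real.pi * T * n) := by
      intro n
      rw [hS]
      calc ‖∑ i ∈ Finset.range (2*n+1), x ^ i * y ^ (2*n+1-1-i)‖
          ≤ ∑ i ∈ Finset.range (2*n+1), ‖x ^ i * y ^ (2*n+1-1-i)‖ := norm_sum_le _ _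
        _ ≤ ∑ i ∈ Finset.range (2*n+1), Real.exp (Real.pi * T * n) := by
            apply Finset.sum_le_sum
            intro i hi
            have hi' : i ≤ 2 * n := by
              have := Finset.mem_range.1 hi; omega
            have hcast : ((2*n+1-1-i : ℕ) : ℝ) = 2 * (n:ℝ) - i := by
              have : (2*n+1-1-i : ℕ) = 2*n - i := by omega
              rw [this, Nat.cast_sub hi']
              push_cast; ring
            rw [norm_mul, norm_pow, norm_pow, hnormx, hnormy, ← Real.exp_nat_mul,
              ← Real.exp_nat_mul, ← Real.exp_add, hcast]
            apply Real.exp_le_exp.2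
            have habs : |z.im * (2 * (n:ℝ) - 2 * i)| ≤ T * n := by
              rw [abs_mul]
              have h2 : |2 * (n:ℝ) - 2 * i| ≤ 2 * n := by
                rw [abs_le]
                constructor
                · have : (0:ℝ) ≤ i := Nat.cast_nonneg i
                  nlinarith
                · have : (i:ℝ) ≥ 0 := Nat.cast_nonneg i
                  nlinarith
              calc |z.im| * |2 * (n:ℝ) - 2*i| ≤ (T/2) * (2*n) := by
                    apply mul_le_mul hz h2 (abs_nonneg _)
                    linarith
                _ = T * n := by ring
            have h5 : (i:ℝ) * -(Real.pi * z.im) + (2 * (n:ℝ) - (i:ℝ)) * (Real.pi * z.im)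
                = Real.pi * (z.im * (2 * (n:ℝ) - 2*i)) := by ring
            rw [h5]
            calc Real.pi * (z.im * (2 * (n:ℝ) - 2*i))
                ≤ Real.pi * (T * n) := by
                  apply mul_le_mul_of_nonneg_left _ Real.pi_pos.le
                  exact le_trans (le_abs_self _) habs
              _ = Real.pi * T * n := by ring
        _ = (2 * (n : ℝ) + 1) * Real.exp (Real.pi * T * n) := by
            rw [Finset.sum_const, Finset.card_range, nsmul_eq_mul]
            push_cast; ring
    -- term bound
    have hcS : ∀ n : ℕ, ‖c n * S n‖
        ≤ (2 * (n : ℝ) + 1) * Real.exp (-(Real.pi * T * (n:ℝ)^2) - Real.pi * T / 4) := by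
      intro n
      rw [norm_mul, hnormc]
      calc Real.exp (-(Real.pi * T * ((n:ℝ) + 1/2) ^ 2)) * ‖S n‖
          ≤ Real.exp (-(Real.pi * T * ((n:ℝ) + 1/2) ^ 2))
            * ((2 * (n : ℝ) + 1) * Real.exp (Real.pi * T * n)) := by
            apply mul_le_mul_of_nonneg_left (hnormS n) (Real.exp_pos _).le
        _ = (2 * (n : ℝ) + 1) * (Real.exp (-(Real.pi * T * ((n:ℝ) + 1/2) ^ 2))
              * Real.exp (Real.pi * T * n)) := by ring
        _ = (2 * (n : ℝ) + 1) * Real.exp (-(Real.pi * T * (n:ℝ)^2) - Real.pi * T / 4) := by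
            rw [← Real.exp_add]
            congr 1
            ring
    -- geometric bound on the tail
    set r : ℝ := Real.exp (-(Real.pi * T)) with hrdef
    have hr0 : 0 < r := Real.exp_pos _
    have hr4 : r ≤ 1/4 := by
      have h1 : (4:ℝ) ≤ Real.exp (Real.pi * (1/2)) := exp_pi_half_ge
      have h2 : Real.exp (Real.pi * (1/2)) ≤ Real.exp (Real.pi * T) := by
        apply Real.exp_le_exp.2
        have := Real.pi_pos
        nlinarith
      have h3 : (4:ℝ) ≤ Real.exp (Real.pi * T) := le_trans h1 h2
      rw [hrdef, Real.exp_neg]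
      rw [inv_le_comm₀ (Real.exp_pos _) (by norm_num)]
      linarith
    have h2r2 : 2 * r ^ 2 < 1 := by nlinarith
    have bound2 : ∀ n : ℕ, ‖c (n+1) * S (n+1)‖
        ≤ Real.exp (-(Real.pi * T) / 4) * (3 * r) * (2 * r ^ 2) ^ n := by
      intro n
      refine le_trans (hcS (n+1)) ?_
      have e1 : Real.exp (-(Real.pi * T * ((n:ℝ)+1) ^ 2)) = r ^ ((n+1)^2 : ℕ) := by
        rw [hrdef, ← Real.exp_nat_mul]
        congr 1
        push_cast
        ring
      have e2 : r ^ ((n+1)^2 : ℕ) ≤ r ^ (2*n+1) := by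
        apply pow_le_pow_of_le_one hr0.le (by linarith)
        nlinarith [sq_nonneg n]
      have e3 : (2 * ((n:ℝ)+1) + 1) ≤ 3 * 2 ^ n := by
        have := nat_ineq n
        push_cast at this ⊢
        linarith
      have e4 : Real.exp (-(Real.pi * T * ((n:ℝ)+1)^2) - Real.pi * T / 4)
          = Real.exp (-(Real.pi * T) / 4) * r ^ ((n+1)^2 : ℕ) := by
        rw [← e1, ← Real.exp_add]
        congr 1
        ring
      have cast1 : ((n:ℝ)+1) = ((n+1 : ℕ) : ℝ) := by push_cast; ring
      calc (2 * ((n+1:ℕ):ℝ) + 1) * Real.exp (-(Real.pi * T * ((n+1:ℕ):ℝ)^2) - Real.pi * T / 4)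
          = (2 * ((n:ℝ)+1) + 1) * (Real.exp (-(Real.pi * T) / 4) * r ^ ((n+1)^2 : ℕ)) := by
            rw [← cast1, e4]
        _ ≤ (3 * 2 ^ n) * (Real.exp (-(Real.pi * T) / 4) * r ^ (2*n+1)) := by
            apply mul_le_mul e3 (by
              apply mul_le_mul_of_nonneg_left e2 (Real.exp_pos _).le) (by positivity) (by positivity)
        _ = Real.exp (-(Real.pi * T) / 4) * (3 * r) * (2 * r ^ 2) ^ n := by
            rw [mul_pow]
            ring
    have hDsum : Summable (fun n : ℕ => Real.exp (-(Real.pi * T) / 4) * (3 * r) * (2 * r ^ 2) ^ n) :=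
      (summable_geometric_of_lt_one (by positivity) h2r2).mul_left _
    have hsumtail : Summable (fun n : ℕ => ‖c (n+1) * S (n+1)‖) :=
      Summable.of_nonneg_of_le (fun n => norm_nonneg _) bound2 hDsum
    have htail : ‖∑' n : ℕ, c (n+1) * S (n+1)‖
        ≤ Real.exp (-(Real.pi * T) / 4) * (3 * r) * (1 - 2 * r ^ 2)⁻¹ := by
      calc ‖∑' n : ℕ, c (n+1) * S (n+1)‖ ≤ ∑' n : ℕ, ‖c (n+1) * S (n+1)‖ :=
            norm_tsum_le_tsum_norm hsumtail
        _ ≤ ∑' n : ℕ, Real.exp (-(Real.pi * T) / 4) * (3 * r) * (2 * r ^ 2) ^ n :=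
            Summable.tsum_le_tsum bound2 hsumtail hDsum
        _ = Real.exp (-(Real.pi * T) / 4) * (3 * r) * (1 - 2 * r ^ 2)⁻¹ := by
            rw [tsum_mul_left, tsum_geometric_of_lt_one (by positivity) h2r2]
    have hhead : ‖c 0 * S 0‖ = Real.exp (-(Real.pi * T) / 4) := by
      have hS0 : S 0 = 1 := by
        simp [hS]
      rw [hS0, mul_one, hnormc 0]
      congr 1
      push_cast
      ring
    have hsplit : (0:ℂ) = c 0 * S 0 + ∑' n : ℕ, c (n+1) * S (n+1) := by
      rw [← hG]
      exact Summable.tsum_eq_zero_add hsumcS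
    have hmain : Real.exp (-(Real.pi * T) / 4) ≤ Real.exp (-(Real.pi * T) / 4) * (3 * r) * (1 - 2 * r ^ 2)⁻¹ := by
      have h0 : c 0 * S 0 = - ∑' n : ℕ, c (n+1) * S (n+1) := by
        linear_combination - hsplit
      calc Real.exp (-(Real.pi * T) / 4) = ‖c 0 * S 0‖ := hhead.symm
        _ = ‖∑' n : ℕ, c (n+1) * S (n+1)‖ := by rw [h0, norm_neg]
        _ ≤ Real.exp (-(Real.pi * T) / 4) * (3 * r) * (1 - 2 * r ^ 2)⁻¹ := htail
    -- numeric contradiction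
    have hE : 0 < Real.exp (-(Real.pi * T) / 4) := Real.exp_pos _
    have hfrac : (3 * r) * (1 - 2 * r ^ 2)⁻¹ ≤ 6/7 := by
      rw [← div_eq_mul_inv]
      have h78 : (7:ℝ)/8 ≤ 1 - 2 * r ^ 2 := by nlinarith
      calc (3*r) / (1 - 2*r^2) ≤ (3/4) / (7/8) := by
            apply div_le_div₀ (by norm_num) (by linarith) (by norm_num) h78
        _ = 6/7 := by norm_num
    nlinarith [hmain, hE, hfrac, mul_le_mul_of_nonneg_left hfrac hE.le]

lemma base_case {τ : ℂ} (hτ2 : (1:ℝ)/2 ≤ τ.im) :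
    ∀ z, V τ z = 0 → ∃ m n : ℤ, z = (m : ℂ) + (n : ℂ) * τ := by
  intro z hz
  have hτ : 0 < τ.im := lt_of_lt_of_le (by norm_num) hτ2
  set n : ℤ := round (z.im / τ.im) with hn
  set z' : ℂ := z - n * τ with hz'
  have him : z'.im = z.im - n * τ.im := by
    simp [hz', Complex.sub_im, Complex.mul_im]
  have hstrip : |z'.im| ≤ τ.im / 2 := by
    rw [him]
    have h1 : z.im - n * τ.im = (z.im / τ.im - n) * τ.im := by field_simp
    rw [h1, abs_mul, abs_of_pos hτ]
    calc |z.im / τ.im - n| * τ.im ≤ (1/2) * τ.im := by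
          apply mul_le_mul_of_nonneg_right _ hτ.le
          rw [hn]
          exact abs_sub_round _
      _ = τ.im / 2 := by ring
  have hVz' : V τ z' = 0 := by
    rw [← V_zero_shift τ z' n]
    rw [show z' + n * τ = z from by rw [hz']; ring]
    exact hz
  obtain ⟨m, hm⟩ := strip_lemma hτ2 hstrip hVz'
  exact ⟨m, n, by rw [← hm, hz']; ring⟩

lemma cpow_half_ne_zero {w : ℂ} (hw : w ≠ 0) : w ^ (1/2 : ℂ) ≠ 0 := by
  rw [Complex.cpow_def_of_ne_zero hw]
  exact Complex.exp_ne_zero _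

lemma S_step {τ : ℂ} (hτ : 0 < τ.im)
    (H : ∀ z, V (-1/τ) z = 0 → ∃ m n : ℤ, z = (m : ℂ) + (n : ℂ) * (-1/τ)) :
    ∀ z, V τ z = 0 → ∃ m n : ℤ, z = (m : ℂ) + (n : ℂ) * τ := by
  intro z hz
  have hτ0 : τ ≠ 0 := by
    intro h; rw [h] at hτ; simp at hτ
  set w : ℂ := z + 1/2 + τ/2 with hw
  have hJ : jacobiTheta₂ w τ = 0 := by
    have := V_eq_jacobi τ z
    rw [hz] at this
    have hexp := Complex.exp_ne_zero ((Real.pi : ℂ) * I * τ / 4 + (Real.pi : ℂ) * I * z)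
    exact (mul_eq_zero.1 this.symm).resolve_left hexp
  have hfe := jacobiTheta₂_functional_equation w τ
  rw [hJ] at hfe
  have hA : (1 : ℂ) / (-I * τ) ^ (1/2 : ℂ) * Complex.exp (-(Real.pi:ℂ) * I * w ^ 2 / τ) ≠ 0 := by
    apply mul_ne_zero
    · apply one_div_ne_zero
      apply cpow_half_ne_zero
      exact mul_ne_zero (neg_ne_zero.2 I_ne_zero) hτ0
    · exact Complex.exp_ne_zero _
  have hJ2 : jacobiTheta₂ (w / τ) (-1 / τ) = 0 := by
    rcases mul_eq_zero.1 hfe.symm with h | h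
    · exact absurd h hA
    · exact h
  set z' : ℂ := z/τ + 1/τ with hz'def
  have hVz' : V (-1/τ) z' = 0 := by
    rw [V_eq_jacobi]
    rw [show z' + 1/2 + (-1/τ)/2 = w / τ from by rw [hz'def, hw]; field_simp; ring]
    rw [hJ2, mul_zero]
  obtain ⟨m, n, hmn⟩ := H z' hVz'
  refine ⟨-n - 1, m, ?_⟩
  rw [hz'def] at hmn
  have : z / τ + 1 / τ = (m : ℂ) + (n : ℂ) * (-1 / τ) := hmn
  push_cast
  field_simp at this
  linear_combination this

lemma V_zero_lattice_aux : ∀ N : ℕ, ∀ τ : ℂ, 0 < τ.im → (1:ℝ)/2 ≤ 2 ^ N * τ.im →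
    ∀ z, V τ z = 0 → ∃ m n : ℤ, z = (m : ℂ) + (n : ℂ) * τ := by
  intro N
  induction N with
  | zero =>
      intro τ h0 h1 z hz
      exact base_case (by simpa using h1) z hz
  | succ k ih =>
      intro τ h0 h1 z hz
      by_cases hbig : (1:ℝ)/2 ≤ τ.im
      · exact base_case hbig z hz
      push_neg at hbig
      set k0 : ℤ := -round τ.re with hk0
      set τ₁ : ℂ := τ + k0 with hτ₁
      have hτ₁im : τ₁.im = τ.im := by simp [hτ₁]
      have hτ₁re : |τ₁.re| ≤ 1/2 := by
        have : τ₁.re = τ.re - round τ.re := by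
          simp [hτ₁, hk0]
          ring
        rw [this]
        exact abs_sub_round _
      have hns : Complex.normSq τ₁ ≤ 1/2 := by
        have hre := abs_le.1 hτ₁re
        rw [Complex.normSq_apply, hτ₁im]
        nlinarith [hre.1, hre.2, hbig, h0]
      have hns0 : 0 < Complex.normSq τ₁ := by
        apply Complex.normSq_pos.2
        intro h
        rw [h] at hτ₁im
        simp at hτ₁im
        linarith [hτ₁im ▸ h0]
      set τ₂ : ℂ := -1/τ₁ with hτ₂
      have hτ₂im : τ₂.im = τ₁.im / Complex.normSq τ₁ := by
        rw [hτ₂]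
        rw [show (-1 : ℂ)/τ₁ = -(τ₁⁻¹) from by ring]
        rw [Complex.neg_im, Complex.inv_im]
        ring
      have hτ₂pos : 0 < τ₂.im := by
        rw [hτ₂im, hτ₁im]
        positivity
      have hτ₂ge : 2 * τ.im ≤ τ₂.im := by
        rw [hτ₂im, hτ₁im, le_div_iff₀ hns0]
        nlinarith
      have hC₂ := ih τ₂ hτ₂pos (by
        have : (2:ℝ)^(k+1) * τ.im = 2^k * (2 * τ.im) := by ring
        rw [this] at h1
        calc (1:ℝ)/2 ≤ 2^k * (2*τ.im) := h1
          _ ≤ 2^k * τ₂.im := by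
              apply mul_le_mul_of_nonneg_left hτ₂ge (by positivity))
      have hτ₁pos : 0 < τ₁.im := by rw [hτ₁im]; exact h0
      have hC₁ := S_step hτ₁pos hC₂
      -- transfer C(τ₁) to C(τ)
      have hVτ₁ : V τ₁ z = 0 := by
        rw [hτ₁, V_T τ z k0, hz, mul_zero]
      obtain ⟨m, n, hmn⟩ := hC₁ z hVτ₁
      refine ⟨m + n * k0, n, ?_⟩
      rw [hmn, hτ₁]
      push_cast
      ring

lemma V_zero_lattice {τ : ℂ} (hτ : 0 < τ.im) {z : ℂ} (h : V τ z = 0) :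
    ∃ m n : ℤ, z = (m : ℂ) + (n : ℂ) * τ := by
  obtain ⟨N, hN⟩ := pow_unbounded_of_one_lt (1/(2*τ.im)) (by norm_num : (1:ℝ) < 2)
  apply V_zero_lattice_aux N τ hτ _ z h
  rw [div_lt_iff₀ (by positivity)] at hN
  nlinarith
section ProductIdentity
variable {τ : ℂ}

noncomputable def Th0term (τ u : ℂ) (m : ℤ) : ℂ :=
  Complex.exp (2 * (Real.pi : ℂ) * I * τ * (m : ℂ) ^ 2 + 4 * (Real.pi : ℂ) * I * (m : ℂ) * u)
noncomputable def Th1term (τ u : ℂ) (m : ℤ) : ℂ :=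
  Complex.exp (2 * (Real.pi : ℂ) * I * τ * ((m : ℂ) + 1 / 2) ^ 2
    + 4 * (Real.pi : ℂ) * I * ((m : ℂ) + 1 / 2) * u)

lemma Th0term_eq (u : ℂ) (m : ℤ) : Th0term τ u m = jacobiTheta₂_term m (2*u) (2*τ) := by
  rw [Th0term, jacobiTheta₂_term]; congr 1; ring

lemma Th1term_eq (u : ℂ) (m : ℤ) : Th1term τ u m
    = Complex.exp ((Real.pi : ℂ) * I * τ / 2 + 2 * (Real.pi : ℂ) * I * u)
      * jacobiTheta₂_term m (2*u + τ) (2*τ) := by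
  rw [Th1term, jacobiTheta₂_term, ← Complex.exp_add]; congr 1; ring

lemma summable_norm_Th0term (hτ : 0 < τ.im) (u : ℂ) :
    Summable fun m : ℤ => ‖Th0term τ u m‖ := by
  simp_rw [Th0term_eq]
  exact summable_norm_jacobi (2*u) (by simpa using by positivity : 0 < (2*τ).im)

lemma summable_norm_Th1term (hτ : 0 < τ.im) (u : ℂ) :
    Summable fun m : ℤ => ‖Th1term τ u m‖ := by
  simp_rw [Th1term_eq, norm_mul]
  exact (summable_norm_jacobi (2*u + τ) (by simpa using by positivity : 0 < (2*τ).im)).mul_left _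

lemma Th0_eq_tsum (u : ℂ) : Th0 τ u = ∑' m : ℤ, Th0term τ u m := rfl
lemma Th1_eq_tsum (u : ℂ) : Th1 τ u = ∑' m : ℤ, Th1term τ u m := rfl

/-- The key quadratic-rearrangement identity. -/
lemma product_identity (hτ : 0 < τ.im) (u u' : ℂ) :
    V τ (u + u') * V τ (u - u')
      = -(Th0 τ u * Th1 τ u') + Th1 τ u * Th0 τ u' := by
  set x : ℂ := u + u'
  set y : ℂ := u - u'
  set W : ℤ × ℤ → ℂ := fun p => Vterm τ x p.1 * Vterm τ y p.2 with hW
  -- HasSum W (V τ x * V τ y)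
  have hsumW : Summable W :=
    summable_mul_of_summable_norm (summable_norm_Vterm hτ x) (summable_norm_Vterm hτ y)
  have htsumW : V τ x * V τ y = ∑' p : ℤ × ℤ, W p :=
    tsum_mul_tsum_of_summable_norm (summable_norm_Vterm hτ x) (summable_norm_Vterm hτ y)
  have hWsum : HasSum W (V τ x * V τ y) := htsumW ▸ hsumW.hasSum
  -- HasSum of the two product families
  have hsum01 : Summable (fun p : ℤ × ℤ => Th0term τ u p.1 * Th1term τ u' p.2) :=
    summable_mul_of_summable_norm (summable_norm_Th0term hτ u) (summable_norm_Th1term hτ u')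
  have htsum01 : Th0 τ u * Th1 τ u' = ∑' p : ℤ × ℤ, Th0term τ u p.1 * Th1term τ u' p.2 :=
    tsum_mul_tsum_of_summable_norm (summable_norm_Th0term hτ u) (summable_norm_Th1term hτ u')
  have h01 : HasSum (fun p : ℤ × ℤ => Th0term τ u p.1 * Th1term τ u' p.2)
      (Th0 τ u * Th1 τ u') := htsum01 ▸ hsum01.hasSum
  have hsum10 : Summable (fun p : ℤ × ℤ => Th1term τ u p.1 * Th0term τ u' p.2) :=
    summable_mul_of_summable_norm (summable_norm_Th1term hτ u) (summable_norm_Th0term hτ u')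
  have htsum10 : Th1 τ u * Th0 τ u' = ∑' p : ℤ × ℤ, Th1term τ u p.1 * Th0term τ u' p.2 :=
    tsum_mul_tsum_of_summable_norm (summable_norm_Th1term hτ u) (summable_norm_Th0term hτ u')
  have h10 : HasSum (fun p : ℤ × ℤ => Th1term τ u p.1 * Th0term τ u' p.2)
      (Th1 τ u * Th0 τ u') := htsum10 ▸ hsum10.hasSum
  -- the two injections
  set i₁ : ℤ × ℤ → ℤ × ℤ := fun p => (p.1 + p.2, p.1 - p.2 - 1) with hi₁
  set i₂ : ℤ × ℤ → ℤ × ℤ := fun p => (p.1 + p.2, p.1 - p.2) with hi₂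
  have hinj₁ : Function.Injective i₁ := by
    intro a b h
    rw [hi₁, Prod.mk.injEq] at h
    have := h.1; have := h.2
    ext <;> omega
  have hinj₂ : Function.Injective i₂ := by
    intro a b h
    rw [hi₂, Prod.mk.injEq] at h
    have := h.1; have := h.2
    ext <;> omega
  have hmem₁ : ∀ q : ℤ × ℤ, q ∈ Set.range i₁ ↔ Odd (q.1 + q.2) := by
    intro q
    constructor
    · rintro ⟨p, rfl⟩
      refine ⟨p.1 - 1, ?_⟩
      simp only [hi₁]
      ring
    · rintro ⟨t, ht⟩
      exact ⟨(t + 1, q.1 - t - 1), by simp [hi₁, Prod.ext_iff]; omega⟩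
  have hmem₂ : ∀ q : ℤ × ℤ, q ∈ Set.range i₂ ↔ Even (q.1 + q.2) := by
    intro q
    constructor
    · rintro ⟨p, rfl⟩
      refine ⟨p.1, ?_⟩
      simp only [hi₂]
      ring
    · rintro ⟨t, ht⟩
      exact ⟨(t, q.1 - t), by simp [hi₂, Prod.ext_iff]; omega⟩
  have hcompl : IsCompl (Set.range i₁) (Set.range i₂) := by
    constructor
    · rw [Set.disjoint_left]
      intro q hq1 hq2
      rw [hmem₁] at hq1
      rw [hmem₂] at hq2
      exact (Int.not_odd_iff_even.2 hq2) hq1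
    · rw [codisjoint_iff_le_sup]
      intro q _
      rcases Int.even_or_odd (q.1 + q.2) with h | h
      · exact Set.mem_union_right _ ((hmem₂ q).2 h)
      · exact Set.mem_union_left _ ((hmem₁ q).2 h)
  -- pointwise identities
  have hptw₁ : ∀ p : ℤ × ℤ, W (i₁ p) = -(Th0term τ u p.1 * Th1term τ u' p.2) := by
    rintro ⟨m, n⟩
    simp only [hW, hi₁, Vterm, Th0term, Th1term]
    rw [← Complex.exp_add, ← Complex.exp_add]
    rw [show (Real.pi : ℂ) * I * τ * (((m + n : ℤ) : ℂ) + 1 / 2) ^ 2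
          + 2 * (Real.pi : ℂ) * I * (((m + n : ℤ) : ℂ) + 1 / 2) * x
          + (Real.pi : ℂ) * I * ((m + n : ℤ) : ℂ)
        + ((Real.pi : ℂ) * I * τ * (((m - n - 1 : ℤ) : ℂ) + 1 / 2) ^ 2
          + 2 * (Real.pi : ℂ) * I * (((m - n - 1 : ℤ) : ℂ) + 1 / 2) * y
          + (Real.pi : ℂ) * I * ((m - n - 1 : ℤ) : ℂ))
        = ((2 * (Real.pi : ℂ) * I * τ * (m : ℂ) ^ 2 + 4 * (Real.pi : ℂ) * I * (m : ℂ) * u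
            + (2 * (Real.pi : ℂ) * I * τ * ((n : ℂ) + 1 / 2) ^ 2
              + 4 * (Real.pi : ℂ) * I * ((n : ℂ) + 1 / 2) * u')) + -((Real.pi : ℂ) * I))
          + (m : ℤ) * (2 * (Real.pi : ℂ) * I) from by push_cast; ring]
    rw [Complex.exp_add, Complex.exp_int_mul_two_pi_mul_I, mul_one, Complex.exp_add,
      Complex.exp_neg, Complex.exp_pi_mul_I, Complex.exp_add]
    ring
  have hptw₂ : ∀ p : ℤ × ℤ, W (i₂ p) = Th1term τ u p.1 * Th0term τ u' p.2 := by
    rintro ⟨m, n⟩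
    simp only [hW, hi₂, Vterm, Th0term, Th1term]
    rw [← Complex.exp_add, ← Complex.exp_add]
    rw [show (Real.pi : ℂ) * I * τ * (((m + n : ℤ) : ℂ) + 1 / 2) ^ 2
          + 2 * (Real.pi : ℂ) * I * (((m + n : ℤ) : ℂ) + 1 / 2) * x
          + (Real.pi : ℂ) * I * ((m + n : ℤ) : ℂ)
        + ((Real.pi : ℂ) * I * τ * (((m - n : ℤ) : ℂ) + 1 / 2) ^ 2
          + 2 * (Real.pi : ℂ) * I * (((m - n : ℤ) : ℂ) + 1 / 2) * y
          + (Real.pi : ℂ) * I * ((m - n : ℤ) : ℂ))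
        = (2 * (Real.pi : ℂ) * I * τ * ((m : ℂ) + 1 / 2) ^ 2
            + 4 * (Real.pi : ℂ) * I * ((m : ℂ) + 1 / 2) * u
            + (2 * (Real.pi : ℂ) * I * τ * (n : ℂ) ^ 2 + 4 * (Real.pi : ℂ) * I * (n : ℂ) * u'))
          + (m : ℤ) * (2 * (Real.pi : ℂ) * I) from by push_cast; ring]
    rw [Complex.exp_add, Complex.exp_int_mul_two_pi_mul_I, mul_one, Complex.exp_add]
  -- HasSum over each range
  have hA : HasSum (fun p : ℤ × ℤ => W (i₁ p)) (-(Th0 τ u * Th1 τ u')) := by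
    rw [show (fun p : ℤ × ℤ => W (i₁ p)) = fun p : ℤ × ℤ =>
        -(Th0term τ u p.1 * Th1term τ u' p.2) from funext hptw₁]
    exact h01.neg
  have hB : HasSum (fun p : ℤ × ℤ => W (i₂ p)) (Th1 τ u * Th0 τ u') := by
    rw [show (fun p : ℤ × ℤ => W (i₂ p)) = fun p : ℤ × ℤ =>
        Th1term τ u p.1 * Th0term τ u' p.2 from funext hptw₂]
    exact h10
  have hW' : HasSum W (-(Th0 τ u * Th1 τ u') + Th1 τ u * Th0 τ u') :=
    HasSum.add_isCompl hcompl (hinj₁.hasSum_range_iff.mpr hA) (hinj₂.hasSum_range_iff.mpr hB)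
  exact hWsum.unique hW'

end ProductIdentity

end ThetaProofAux

/-- if `u, u' ∈ ℂ` satisfy both `Θ₀(u)Θ₁(u') = Θ₁(u)Θ₀(u')` and
`Θ₀(u+τ/4)Θ₁(u'+τ/4) = Θ₁(u+τ/4)Θ₀(u'+τ/4)`, then `u − u' ∈ Λ_τ`.  (Hence the map
`Φ = (Φ₁, Φ₂) : ℂ/Λ_τ → ℙ¹ × ℙ¹` with `Φ₁(u) = (Θ₀(u) : −Θ₁(u))` and
`Φ₂(u) = (Θ₀(u+τ/4) : −iΘ₁(u+τ/4))` is injective on the elliptic curve `E_τ`.) -/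

theorem theta_embedding_injective (τ : ℂ) (hτ : 0 < τ.im) (u u' : ℂ)
    (h1 : Th0 τ u * Th1 τ u' = Th1 τ u * Th0 τ u')
    (h2 : Th0 τ (u + τ / 4) * Th1 τ (u' + τ / 4)
        = Th1 τ (u + τ / 4) * Th0 τ (u' + τ / 4)) :
    inLattice τ (u - u') := by
  have e1 : V τ (u + u') * V τ (u - u') = 0 := by
    rw [product_identity hτ u u', h1]
    ring
  have e2 : V τ ((u + τ/4) + (u' + τ/4)) * V τ ((u + τ/4) - (u' + τ/4)) = 0 := by
    rw [product_identity hτ (u + τ/4) (u' + τ/4), h2]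
    ring
  rw [show (u + τ/4) + (u' + τ/4) = (u + u') + τ/2 from by ring,
      show (u + τ/4) - (u' + τ/4) = u - u' from by ring] at e2
  rcases mul_eq_zero.1 e1 with hX | hY
  · rcases mul_eq_zero.1 e2 with hX2 | hY2
    · exfalso
      obtain ⟨a, b, hab⟩ := V_zero_lattice hτ hX
      obtain ⟨a', b', hab'⟩ := V_zero_lattice hτ hX2
      have hsub2 : τ = ((2*(a' - a) : ℤ) : ℂ) + ((2*(b' - b) : ℤ) : ℂ) * τ := by
        push_cast
        linear_combination 2 * hab' - 2 * hab
      have him := congrArg Complex.im hsub2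
      simp only [Complex.add_im, Complex.mul_im, Complex.intCast_im, Complex.intCast_re,
        zero_add, zero_mul, add_zero, mul_zero] at him
      have hzero : (((2*(b' - b) : ℤ) : ℝ) - 1) * τ.im = 0 := by
        linear_combination - him
      rcases mul_eq_zero.1 hzero with h | h
      · have h1 : ((2*(b' - b) : ℤ) : ℝ) = 1 := by linarith
        have h2 : (2*(b' - b) : ℤ) = 1 := by exact_mod_cast h1
        omega
      · exact (ne_of_gt hτ) h
    · obtain ⟨m, n, h⟩ := V_zero_lattice hτ hY2
      exact ⟨m, n, h⟩
  · obtain ⟨m, n, h⟩ := V_zero_lattice hτ hY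
    exact ⟨m, n, h⟩
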